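/- Fix integers K, L ≥ 1, ρ > 0 and T > 0. Let x : [0,∞) → ℝ^{K×L} be differentiable solving dx_{ij}/dt = ρ(x_{i·}(t) x_{·j}(t) − x_{ij}(t)) for all t ≥ 0 and all i,j, where x_{i·}(t) = ∑_{j=1}^L x_{ij}(t) and x_{·j}(t) = ∑_{i=1}^K x_{ij}(t), with x_{ij}(0) > 0 for all i,j and ∑_{i,j} x_{ij}(0) = 1. Define the accumulated information I_T = ∫_0^T ∑_{i=1}^K ∑_{j=1}^L (x_{ij}(t) − x_{i·}(t)x_{·j}(t))^2 / x_{ij}(t) dt. Then I_T = ρ^{-1} ∑_{i=1}^K ∑_{j=1}^L x_{i·}(0) x_{·j}(0) log(x_{ij}(T)/x_{ij}(0)). -/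

import Mathlib

open Set Finset

/-- Key algebraic identity for the total-mass ODE. -/
lemma recomb_sum_sq {K L : ℕ} (f : Fin K → Fin L → ℝ) :
    ∑ i, ∑ j, (∑ j', f i j') * (∑ i', f i' j)
      = (∑ i, ∑ j, f i j) * (∑ i, ∑ j, f i j) := by
  rw [← Finset.sum_mul_sum]
  congr 1
  exact Finset.sum_comm

/-- Along a differentiable solution of the deterministic recombination
equation with `ρ > 0`, strictly positive initial frequencies summing to 1, the accumulated
information satisfies
`I_T = ∫_0^T ∑_{i,j} (x_{ij} − x_{i·}x_{·j})²/x_{ij} dt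
     = ρ⁻¹ ∑_{i,j} x_{i·}(0) x_{·j}(0) log(x_{ij}(T)/x_{ij}(0))`. -/
theorem deterministic_information_formula (K L : ℕ) (hK : 1 ≤ K) (hL : 1 ≤ L)
    (ρ T : ℝ) (hρ : 0 < ρ) (hT : 0 < T)
    (x : ℝ → Fin K → Fin L → ℝ)
    (hode : ∀ t, 0 ≤ t → ∀ i j, HasDerivAt (fun s => x s i j)
      (ρ * ((∑ j', x t i j') * (∑ i', x t i' j) - x t i j)) t)
    (hx0 : ∀ i j, 0 < x 0 i j) (hsum0 : ∑ i, ∑ j, x 0 i j = 1) :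
    (∫ t in (0 : ℝ)..T,
        ∑ i, ∑ j, (x t i j - (∑ j', x t i j') * (∑ i', x t i' j)) ^ 2 / x t i j)
      = ρ⁻¹ * ∑ i, ∑ j,
          (∑ j', x 0 i j') * (∑ i', x 0 i' j) * Real.log (x T i j / x 0 i j) := by
  haveI : Nonempty (Fin K) := ⟨⟨0, hK⟩⟩
  haveI : Nonempty (Fin L) := ⟨⟨0, hL⟩⟩
  -- continuity of each coordinate on [0,T]
  have hxc : ∀ i j, ContinuousOn (fun t => x t i j) (Icc 0 T) := fun i j t ht =>
    ((hode t ht.1 i j).continuousAt).continuousWithinAt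
  -- derivative of the total mass S
  have hSder : ∀ t, 0 ≤ t → HasDerivAt (fun s => ∑ i, ∑ j, x s i j)
      (ρ * ((∑ i, ∑ j, x t i j) * (∑ i, ∑ j, x t i j) - (∑ i, ∑ j, x t i j))) t := by
    intro t ht
    have h := HasDerivAt.fun_sum (fun i (_ : i ∈ Finset.univ) =>
      HasDerivAt.fun_sum (fun j (_ : j ∈ Finset.univ) => hode t ht i j))
    convert h using 1
    · rfl
    · rfl
    simp only [← Finset.mul_sum]
    congr 1
    simp only [Finset.sum_sub_distrib]
    rw [recomb_sum_sq]
  have hScont : ContinuousOn (fun s => ∑ i, ∑ j, x s i j) (Icc 0 T) := fun t ht =>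
    ((hSder t ht.1).continuousAt).continuousWithinAt
  obtain ⟨C, hC⟩ : ∃ C, ∀ t ∈ Icc (0:ℝ) T, ‖∑ i, ∑ j, x t i j‖ ≤ C :=
    isCompact_Icc.exists_bound_of_continuousOn hScont
  -- total mass is conserved (Grönwall)
  have hSone : ∀ t ∈ Icc (0:ℝ) T, ∑ i, ∑ j, x t i j = 1 := by
    intro t ht
    have key := norm_le_gronwallBound_of_norm_deriv_right_le
      (f := fun s => (∑ i, ∑ j, x s i j) - 1)
      (f' := fun s => ρ * ((∑ i, ∑ j, x s i j) * (∑ i, ∑ j, x s i j) - (∑ i, ∑ j, x s i j)))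
      (δ := 0) (K := ρ * C) (ε := 0) (a := 0) (b := T)
      (hScont.sub continuousOn_const)
      (fun s hs => ((hSder s hs.1).sub_const 1).hasDerivWithinAt)
      (by simp [hsum0])
      (by
        intro s hs
        have h1 : ρ * ((∑ i, ∑ j, x s i j) * (∑ i, ∑ j, x s i j) - (∑ i, ∑ j, x s i j))
            = (ρ * (∑ i, ∑ j, x s i j)) * ((∑ i, ∑ j, x s i j) - 1) := by ring
        rw [h1, norm_mul, add_zero]
        have h2 : ‖ρ * (∑ i, ∑ j, x s i j)‖ ≤ ρ * C := by
          rw [norm_mul, Real.norm_eq_abs, abs_of_pos hρ]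
          exact mul_le_mul_of_nonneg_left (hC s ⟨hs.1, hs.2.le⟩) hρ.le
        exact mul_le_mul_of_nonneg_right h2 (norm_nonneg _))
      t ht
    rw [gronwallBound_ε0_δ0] at key
    have : ‖(∑ i, ∑ j, x t i j) - 1‖ = 0 := le_antisymm key (norm_nonneg _)
    rw [norm_eq_zero, sub_eq_zero] at this
    exact this
  -- row marginals are constant
  have hpder : ∀ t, 0 ≤ t → ∀ i, HasDerivAt (fun s => ∑ j', x s i j')
      (ρ * ((∑ j', x t i j') * ((∑ i, ∑ j, x t i j) - 1))) t := by
    intro t ht i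
    have h := HasDerivAt.fun_sum (fun j (_ : j ∈ Finset.univ) => hode t ht i j)
    convert h using 1
    · rfl
    · rfl
    rw [← Finset.mul_sum]
    congr 1
    rw [Finset.sum_sub_distrib, ← Finset.mul_sum, mul_sub, mul_one,
      Finset.sum_comm]
  have hqder : ∀ t, 0 ≤ t → ∀ j, HasDerivAt (fun s => ∑ i', x s i' j)
      (ρ * ((∑ i', x t i' j) * ((∑ i, ∑ j, x t i j) - 1))) t := by
    intro t ht j
    have h := HasDerivAt.fun_sum (fun i (_ : i ∈ Finset.univ) => hode t ht i j)
    convert h using 1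
    · rfl
    · rfl
    rw [← Finset.mul_sum]
    congr 1
    rw [Finset.sum_sub_distrib, ← Finset.sum_mul, mul_sub, mul_one, mul_comm]
  have hpconst : ∀ i, ∀ t ∈ Icc (0:ℝ) T, (∑ j', x t i j') = ∑ j', x 0 i j' := by
    intro i
    apply constant_of_has_deriv_right_zero
    · intro t ht; exact ((hpder t ht.1 i).continuousAt).continuousWithinAt
    · intro s hs
      have h := (hpder s hs.1 i).hasDerivWithinAt (s := Ici s)
      rwa [hSone s ⟨hs.1, hs.2.le⟩, sub_self, mul_zero, mul_zero] at h
  have hqconst : ∀ j, ∀ t ∈ Icc (0:ℝ) T, (∑ i', x t i' j) = ∑ i', x 0 i' j := by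
    intro j
    apply constant_of_has_deriv_right_zero
    · intro t ht; exact ((hqder t ht.1 j).continuousAt).continuousWithinAt
    · intro s hs
      have h := (hqder s hs.1 j).hasDerivWithinAt (s := Ici s)
      rwa [hSone s ⟨hs.1, hs.2.le⟩, sub_self, mul_zero, mul_zero] at h
  -- explicit solution and positivity
  have hexp : ∀ i j, ∀ t ∈ Icc (0:ℝ) T,
      Real.exp (ρ * t) * (x t i j - (∑ j', x 0 i j') * (∑ i', x 0 i' j))
        = x 0 i j - (∑ j', x 0 i j') * (∑ i', x 0 i' j) := by
    intro i j
    have hF := constant_of_has_deriv_right_zero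
      (f := fun t => Real.exp (ρ * t) * (x t i j - (∑ j', x 0 i j') * (∑ i', x 0 i' j)))
      (a := 0) (b := T)
      (by
        apply ContinuousOn.mul
        · exact (Real.continuous_exp.comp (continuous_const.mul continuous_id)).continuousOn
        · exact (hxc i j).sub continuousOn_const)
      (by
        intro s hs
        have hE : HasDerivAt (fun t => Real.exp (ρ * t)) (Real.exp (ρ * s) * ρ) s := by
          simpa using (HasDerivAt.exp (by simpa using (hasDerivAt_id s).const_mul ρ))
        have hmul := hE.mul ((hode s hs.1 i j).sub_const
          ((∑ j', x 0 i j') * (∑ i', x 0 i' j)))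
        have hval : Real.exp (ρ * s) * ρ * (x s i j - (∑ j', x 0 i j') * (∑ i', x 0 i' j))
            + Real.exp (ρ * s) * (ρ * ((∑ j', x s i j') * (∑ i', x s i' j) - x s i j)) = 0 := by
          rw [hpconst i s ⟨hs.1, hs.2.le⟩, hqconst j s ⟨hs.1, hs.2.le⟩]
          ring
        rw [hval] at hmul
        exact hmul.hasDerivWithinAt)
    intro t ht
    have := hF t ht
    simpa using this
  have hxpos : ∀ i j, ∀ t ∈ Icc (0:ℝ) T, 0 < x t i j := by
    intro i j t ht
    have hp0 : 0 < ∑ j', x 0 i j' := Finset.sum_pos (fun j' _ => hx0 i j') Finset.univ_nonempty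
    have hq0 : 0 < ∑ i', x 0 i' j := Finset.sum_pos (fun i' _ => hx0 i' j) Finset.univ_nonempty
    have hE1 : (1:ℝ) ≤ Real.exp (ρ * t) := Real.one_le_exp (mul_nonneg hρ.le ht.1)
    have hEpos : (0:ℝ) < Real.exp (ρ * t) := Real.exp_pos _
    have h := hexp i j t ht
    nlinarith [hx0 i j, mul_pos hp0 hq0]
  -- the antiderivative
  have hG : ∀ t ∈ Icc (0:ℝ) T, HasDerivAt
      (fun s => ρ⁻¹ * ∑ i, ∑ j,
        ((∑ j', x 0 i j') * (∑ i', x 0 i' j) * Real.log (x s i j) - x s i j))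
      (∑ i, ∑ j, (x t i j - (∑ j', x t i j') * (∑ i', x t i' j)) ^ 2 / x t i j) t := by
    intro t ht
    have big := HasDerivAt.const_mul ρ⁻¹ (HasDerivAt.fun_sum (fun i (_ : i ∈ Finset.univ) =>
      HasDerivAt.fun_sum (fun j (_ : j ∈ Finset.univ) =>
        (((hode t ht.1 i j).log (hxpos i j t ht).ne').const_mul
            ((∑ j', x 0 i j') * (∑ i', x 0 i' j))).sub (hode t ht.1 i j))))
    convert big using 1
    · rfl
    · rfl
    · rfl
    rw [Finset.mul_sum]
    refine Finset.sum_congr rfl fun i _ => ?_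
    rw [Finset.mul_sum]
    refine Finset.sum_congr rfl fun j _ => ?_
    rw [hpconst i t ht, hqconst j t ht]
    have hne : x t i j ≠ 0 := (hxpos i j t ht).ne'
    field_simp
    ring
  -- integrability of the integrand
  have hcont : ContinuousOn
      (fun t => ∑ i, ∑ j, (x t i j - (∑ j', x t i j') * (∑ i', x t i' j)) ^ 2 / x t i j)
      (Icc 0 T) := by
    apply continuousOn_finset_sum
    intro i _
    apply continuousOn_finset_sum
    intro j _
    apply ContinuousOn.div
    · exact (((hxc i j).sub ((continuousOn_finset_sum _ fun j' _ => hxc i j').mul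
        (continuousOn_finset_sum _ fun i' _ => hxc i' j))).pow 2)
    · exact hxc i j
    · intro t ht; exact (hxpos i j t ht).ne'
  have hkey := intervalIntegral.integral_eq_sub_of_hasDerivAt
    (f := fun s => ρ⁻¹ * ∑ i, ∑ j,
      ((∑ j', x 0 i j') * (∑ i', x 0 i' j) * Real.log (x s i j) - x s i j))
    (f' := fun t => ∑ i, ∑ j,
      (x t i j - (∑ j', x t i j') * (∑ i', x t i' j)) ^ 2 / x t i j)
    (a := 0) (b := T)
    (fun t ht => hG t (by rwa [Set.uIcc_of_le hT.le] at ht))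
    (by
      apply ContinuousOn.intervalIntegrable
      rwa [Set.uIcc_of_le hT.le])
  rw [hkey]
  -- final computation
  have hTmem : T ∈ Icc (0:ℝ) T := ⟨hT.le, le_rfl⟩
  have h0mem : (0:ℝ) ∈ Icc (0:ℝ) T := ⟨le_rfl, hT.le⟩
  rw [← mul_sub]
  congr 1
  rw [← Finset.sum_sub_distrib]
  have hST := hSone T hTmem
  calc ∑ i, (∑ j, ((∑ j', x 0 i j') * (∑ i', x 0 i' j) * Real.log (x T i j) - x T i j)
        - ∑ j, ((∑ j', x 0 i j') * (∑ i', x 0 i' j) * Real.log (x 0 i j) - x 0 i j))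
      = ∑ i, ∑ j, ((∑ j', x 0 i j') * (∑ i', x 0 i' j) * Real.log (x T i j)
          - (∑ j', x 0 i j') * (∑ i', x 0 i' j) * Real.log (x 0 i j))
        + ((∑ i, ∑ j, x 0 i j) - ∑ i, ∑ j, x T i j) := by
        simp only [Finset.sum_sub_distrib]
        ring
    _ = ∑ i, ∑ j, (∑ j', x 0 i j') * (∑ i', x 0 i' j) * Real.log (x T i j / x 0 i j) := by
        rw [hST, hsum0, sub_self, add_zero]
        refine Finset.sum_congr rfl fun i _ => Finset.sum_congr rfl fun j _ => ?_
        rw [Real.log_div (hxpos i j T hTmem).ne' (hx0 i j).ne', mul_sub]
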